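/- Let G be a nonabelian metacyclic p-group with presentation ⟨a, b | a^{p^n} = 1, b^{p^m} = a^{p^t}, b a b⁻¹ = a^r⟩ where r - 1 = p s. If p > 2, or if p = 2 and s is even, then the commutator c = [b, a] = b a b⁻¹ a⁻¹ satisfies c - 1 ∈ I_K(G)³, where K is a field of characteristic p. -/

import Mathlib

/-- The Jacobson radical of a ring, as an ideal. -/
def ringRad (A : Type*) [Ring A] : Ideal A := (⊥ : Ideal A).jacobson

/-- `B` is a filtered multiplicative `K`-basis of the `K`-algebra `A`:
it is a `K`-basis, products of basis elements are `0` or again basis elements,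
and `B ∩ rad A` is a `K`-basis of the Jacobson radical `rad A`. -/
def IsFilteredMulBasis (K : Type*) {A : Type*} [Field K] [Ring A] [Algebra K A]
    (B : Set A) : Prop :=
  LinearIndependent K ((↑) : B → A) ∧ Submodule.span K B = ⊤ ∧
  (∀ b₁ ∈ B, ∀ b₂ ∈ B, b₁ * b₂ = 0 ∨ b₁ * b₂ ∈ B) ∧
  LinearIndependent K ((↑) : ↥(B ∩ (ringRad A : Set A)) → A) ∧
  Submodule.span K (B ∩ (ringRad A : Set A)) = Submodule.restrictScalars K (ringRad A)

/-- The augmentation ideal of a group algebra. -/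
noncomputable def augIdeal (K G : Type*) [Field K] [Group G] : Ideal (MonoidAlgebra K G) :=
  RingHom.ker (MonoidAlgebra.lift K K G 1).toRingHom

lemma of_sub_one_mem_aug {K G : Type*} [Field K] [Group G] (g : G) :
    MonoidAlgebra.of K G g - 1 ∈ augIdeal K G := by
  simp [augIdeal, RingHom.mem_ker, map_sub, MonoidAlgebra.lift_of]

theorem stmt_19 {K : Type*} [Field K] {p : ℕ} [Fact p.Prime] [CharP K p]
    {G : Type*} [Group G] [Finite G] (n m t r s : ℕ) (a b : G)
    (ha : a ^ p ^ n = 1) (hb : b ^ p ^ m = a ^ p ^ t)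
    (hconj : b * a * b⁻¹ = a ^ r)
    (hgen : Subgroup.closure {a, b} = (⊤ : Subgroup G))
    (hr : r ^ p ^ m ≡ 1 [MOD p ^ n]) (hrt : p ^ t * (r - 1) ≡ 0 [MOD p ^ n])
    (hnab : ¬ ∀ x y : G, x * y = y * x)
    (hs : r - 1 = p * s)
    (hcase : 2 < p ∨ (p = 2 ∧ Even s)) :
    MonoidAlgebra.of K G (b * a * b⁻¹ * a⁻¹) - 1 ∈ augIdeal K G ^ 3 := by
  haveI : CharP (MonoidAlgebra K G) p := charP_of_injective_algebraMap' K p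
  rcases Nat.eq_zero_or_pos r with hr0 | hr1
  · subst hr0
    have h1 : b * a * b⁻¹ = 1 := by simpa using hconj
    have ha1 : a = 1 := by
      have : a = b⁻¹ * (b * a * b⁻¹) * b := by group
      rw [h1] at this
      simpa using this
    rw [show b * a * b⁻¹ * a⁻¹ = 1 by rw [ha1]; group, map_one, sub_self]
    exact zero_mem _
  · have hc : b * a * b⁻¹ * a⁻¹ = a ^ (p * s) := by
      rw [hconj, ← hs]
      conv_lhs => rw [show r = (r - 1) + 1 from (Nat.succ_pred_eq_of_pos hr1).symm]
      rw [pow_succ, mul_assoc, mul_inv_cancel, mul_one]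
    rw [hc]
    rcases hcase with h3 | ⟨hp2, u, hu⟩
    · have h1 : a ^ (p * s) = (a ^ s) ^ p := by rw [← pow_mul, Nat.mul_comm]
      have h2 : MonoidAlgebra.of K G (a ^ (p * s)) - 1
          = (MonoidAlgebra.of K G (a ^ s) - 1) ^ p := by
        rw [sub_pow_char_of_commute p (Commute.one_right _), one_pow, ← map_pow, ← h1]
      rw [h2]
      exact Ideal.pow_le_pow_right h3 (Ideal.pow_mem_pow (of_sub_one_mem_aug _) p)
    · subst hp2 hu
      have h1 : a ^ (2 * (u + u)) = (a ^ u) ^ 2 ^ 2 := by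
        rw [← pow_mul]; ring_nf
      have h2 : MonoidAlgebra.of K G (a ^ (2 * (u + u))) - 1
          = (MonoidAlgebra.of K G (a ^ u) - 1) ^ 2 ^ 2 := by
        rw [sub_pow_char_pow_of_commute 2 2 (Commute.one_right _), one_pow, ← map_pow, ← h1]
      rw [h2]
      exact Ideal.pow_le_pow_right (by norm_num) (Ideal.pow_mem_pow (of_sub_one_mem_aug _) 4)
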